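/- arXiv:1606.08991 — 2 statements merged into one kernel-verified Lean document; each statement's English description precedes it below -/
import Mathlib

section
/- If M is a noetherian gcd-monoid satisfying the 3-Ore condition, then the reduction rewrite system R_M on multifractions is convergent: every multifraction reduces to a unique irreducible multifraction. -/
namespace MFR

variable {M : Type*} [Monoid M]

/-- `a` left-divides `b`. -/
def LeftDvd (a b : M) : Prop := ∃ x, a * x = b

/-- `a` right-divides `b`. -/
def RightDvd (a b : M) : Prop := ∃ x, x * a = b

/-- `m` is a right lcm of `a` and `b`. -/
def IsRightLcm (a b m : M) : Prop :=
  LeftDvd a m ∧ LeftDvd b m ∧ ∀ m', LeftDvd a m' → LeftDvd b m' → LeftDvd m m'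

/-- `m` is a left lcm of `a` and `b`. -/
def IsLeftLcm (a b m : M) : Prop :=
  RightDvd a m ∧ RightDvd b m ∧ ∀ m', RightDvd a m' → RightDvd b m' → RightDvd m m'

/-- `d` is a left gcd of `a` and `b`. -/
def IsLeftGcd (a b d : M) : Prop :=
  LeftDvd d a ∧ LeftDvd d b ∧ ∀ e, LeftDvd e a → LeftDvd e b → LeftDvd e d

/-- `d` is a right gcd of `a` and `b`. -/
def IsRightGcd (a b d : M) : Prop :=
  RightDvd d a ∧ RightDvd d b ∧ ∀ e, RightDvd e a → RightDvd e b → RightDvd e d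

/-- A gcd-monoid: cancellative, no nontrivial invertible elements,
left and right gcds exist. -/
structure IsGcdMon (M : Type*) [Monoid M] : Prop where
  mul_left_cancel : ∀ a b c : M, a * b = a * c → b = c
  mul_right_cancel : ∀ a b c : M, b * a = c * a → b = c
  unit_eq_one : ∀ a : M, IsUnit a → a = 1
  exists_leftGcd : ∀ a b : M, ∃ d, IsLeftGcd a b d
  exists_rightGcd : ∀ a b : M, ∃ d, IsRightGcd a b d

/-- Proper left divisibility: `a < b`. -/
def PLDvd (a b : M) : Prop := ∃ x, ¬ IsUnit x ∧ a * x = b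

/-- Proper right divisibility. -/
def PRDvd (a b : M) : Prop := ∃ x, ¬ IsUnit x ∧ x * a = b

/-- Noetherian: proper left and right divisibility are well-founded. -/
def Noeth (M : Type*) [Monoid M] : Prop :=
  WellFounded (PLDvd (M := M)) ∧ WellFounded (PRDvd (M := M))

/-- Proper factor relation. -/
def Factor (a b : M) : Prop := ∃ x y, x * a * y = b ∧ (¬ IsUnit x ∨ ¬ IsUnit y)

/-- Atoms: not a product of two non-invertible elements. -/
def Atomic (a : M) : Prop := ¬ IsUnit a ∧ ∀ x y, a = x * y → IsUnit x ∨ IsUnit y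

/-- Existence of a common right multiple. -/
def CommonRightMul (a b : M) : Prop := ∃ m, LeftDvd a m ∧ LeftDvd b m

/-- Existence of a common left multiple. -/
def CommonLeftMul (a b : M) : Prop := ∃ m, RightDvd a m ∧ RightDvd b m

/-- The 3-Ore condition. -/
def ThreeOre (M : Type*) [Monoid M] : Prop :=
  (∀ a b c : M, CommonRightMul a b → CommonRightMul a c → CommonRightMul b c →
    ∃ m, LeftDvd a m ∧ LeftDvd b m ∧ LeftDvd c m) ∧
  (∀ a b c : M, CommonLeftMul a b → CommonLeftMul a c → CommonLeftMul b c →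
    ∃ m, RightDvd a m ∧ RightDvd b m ∧ RightDvd c m)

/-- The product of two multifractions. -/
def fprod : List M → List M → List M
  | [], b => b
  | a, [] => a
  | a, h :: t =>
    if a.length % 2 = 1 then a.dropLast ++ ((a.getLast?.getD 1) * h) :: t
    else a ++ h :: t

/-- The congruence `≃` on multifractions generated by `(1,∅)`, `(a/a,∅)`, `(1/a/a,∅)`. -/
inductive SimEq : List M → List M → Prop
  | one : SimEq [1] []
  | divPos (a : M) : SimEq [a, a] []
  | divNeg (a : M) : SimEq [1, a, a] []
  | refl (a : List M) : SimEq a a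
  | symm {a b} : SimEq a b → SimEq b a
  | trans {a b c} : SimEq a b → SimEq b c → SimEq a c
  | mul {a b c d} : SimEq a b → SimEq c d → SimEq (fprod a c) (fprod b d)

/-- The reduction rule `R_{i,x}` on multifractions (entries indexed from 1):
`Reduce i x a b` means `b = a • R_{i,x}`. -/
def Reduce (i : ℕ) (x : M) (a b : List M) : Prop :=
  (i = 1 ∧ ∃ (a₁ a₂ b₁ b₂ : M) (s : List M),
    a = a₁ :: a₂ :: s ∧ b = b₁ :: b₂ :: s ∧ b₁ * x = a₁ ∧ b₂ * x = a₂) ∨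
  (2 ≤ i ∧ i % 2 = 0 ∧ ∃ (p s : List M) (am ai ap bi bp x' : M),
    p.length = i - 2 ∧
    a = p ++ am :: ai :: ap :: s ∧
    b = p ++ (am * x') :: bi :: bp :: s ∧
    IsRightLcm x ai (x * bi) ∧ x * bi = ai * x' ∧ x * bp = ap) ∨
  (3 ≤ i ∧ i % 2 = 1 ∧ ∃ (p s : List M) (am ai ap bi bp x' : M),
    p.length = i - 2 ∧
    a = p ++ am :: ai :: ap :: s ∧
    b = p ++ (x' * am) :: bi :: bp :: s ∧
    IsLeftLcm x ai (bi * x) ∧ bi * x = x' * ai ∧ bp * x = ap)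

/-- One-step reduction. -/
def Red (a b : List M) : Prop := ∃ i x, x ≠ (1 : M) ∧ Reduce i x a b

/-- Reflexive-transitive closure of one-step reduction. -/
def RedStar : List M → List M → Prop := Relation.ReflTransGen Red

/-- Irreducible multifractions. -/
def RIrred (a : List M) : Prop := ∀ b, ¬ Red a b

/-- Right basic elements: closure of the atoms under right complement. -/
inductive RightBasic : M → Prop
  | atom {a : M} : Atomic a → RightBasic a
  | compl {a b a' : M} : RightBasic a → RightBasic b →
      IsRightLcm a b (b * a') → RightBasic a'

/-- Minimal number of atoms needed to express `a`. -/
noncomputable def atomLen (a : M) : ℕ :=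
  sInf {n | ∃ l : List M, (∀ x ∈ l, Atomic x) ∧ l.length = n ∧ l.prod = a}


-- ==================== auxiliary lemmas ====================

theorem IsGcdMon.mul_eq_one (h : IsGcdMon M) {a b : M} (hab : a * b = 1) :
    a = 1 ∧ b = 1 := by
  have hba : b * a = 1 := by
    have : b * (a * b) = b := by rw [hab, mul_one]
    have : (b * a) * b = 1 * b := by rw [mul_assoc, this, one_mul]
    exact h.mul_right_cancel _ _ _ this
  have ha : a = 1 := h.unit_eq_one a ⟨⟨a, b, hab, hba⟩, rfl⟩
  exact ⟨ha, by rw [ha, one_mul] at hab; exact hab⟩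

theorem IsGcdMon.nonunit (h : IsGcdMon M) {x : M} (hx : x ≠ 1) : ¬ IsUnit x :=
  fun hu => hx (h.unit_eq_one x hu)

theorem rlcm_unique (h : IsGcdMon M) {a b m m' : M}
    (h1 : IsRightLcm a b m) (h2 : IsRightLcm a b m') : m = m' := by
  obtain ⟨u, hu⟩ := h1.2.2 m' h2.1 h2.2.1
  obtain ⟨v, hv⟩ := h2.2.2 m h1.1 h1.2.1
  have : m * (u * v) = m * 1 := by rw [← mul_assoc, hu, hv, mul_one]
  have huv := h.mul_left_cancel _ _ _ this
  have := (h.mul_eq_one huv).1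
  rw [← hu, this, mul_one]

theorem llcm_unique (h : IsGcdMon M) {a b m m' : M}
    (h1 : IsLeftLcm a b m) (h2 : IsLeftLcm a b m') : m = m' := by
  obtain ⟨u, hu⟩ := h1.2.2 m' h2.1 h2.2.1
  obtain ⟨v, hv⟩ := h2.2.2 m h1.1 h1.2.1
  have : (v * u) * m = 1 * m := by rw [mul_assoc, hu, hv, one_mul]
  have huv := h.mul_right_cancel _ _ _ this
  have := (h.mul_eq_one huv).2
  rw [← hu, this, one_mul]

theorem exists_rlcm (h : IsGcdMon M) (hn : Noeth M) {a b : M}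
    (hc : CommonRightMul a b) : ∃ m, IsRightLcm a b m := by
  obtain ⟨m0, hm0⟩ := hc
  obtain ⟨m, hmS, hmin⟩ := hn.1.has_min {m | LeftDvd a m ∧ LeftDvd b m} ⟨m0, hm0⟩
  refine ⟨m, hmS.1, hmS.2, fun m' ha' hb' => ?_⟩
  obtain ⟨d, hd⟩ := h.exists_leftGcd m m'
  have hda : LeftDvd a d := hd.2.2 a hmS.1 ha'
  have hdb : LeftDvd b d := hd.2.2 b hmS.2 hb'
  obtain ⟨t, ht⟩ := hd.1
  have : IsUnit t := by
    by_contra hu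
    exact hmin d ⟨hda, hdb⟩ ⟨t, hu, ht⟩
  have ht1 := h.unit_eq_one t this
  rw [ht1, mul_one] at ht
  exact ht ▸ hd.2.1

theorem exists_llcm (h : IsGcdMon M) (hn : Noeth M) {a b : M}
    (hc : CommonLeftMul a b) : ∃ m, IsLeftLcm a b m := by
  obtain ⟨m0, hm0⟩ := hc
  obtain ⟨m, hmS, hmin⟩ := hn.2.has_min {m | RightDvd a m ∧ RightDvd b m} ⟨m0, hm0⟩
  refine ⟨m, hmS.1, hmS.2, fun m' ha' hb' => ?_⟩
  obtain ⟨d, hd⟩ := h.exists_rightGcd m m'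
  have hda : RightDvd a d := hd.2.2 a hmS.1 ha'
  have hdb : RightDvd b d := hd.2.2 b hmS.2 hb'
  obtain ⟨t, ht⟩ := hd.1
  have : IsUnit t := by
    by_contra hu
    exact hmin d ⟨hda, hdb⟩ ⟨t, hu, ht⟩
  have ht1 := h.unit_eq_one t this
  rw [ht1, one_mul] at ht
  exact ht ▸ hd.2.1

theorem rlcm_mul_left (h : IsGcdMon M) {x A m : M} (hm : IsRightLcm x A m) (c : M) :
    IsRightLcm (c * x) (c * A) (c * m) := by
  obtain ⟨⟨s, hs⟩, ⟨t, ht⟩, hmin⟩ := hm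
  refine ⟨⟨s, by rw [mul_assoc, hs]⟩, ⟨t, by rw [mul_assoc, ht]⟩, fun m' ⟨u, hu⟩ ⟨v, hv⟩ => ?_⟩
  have : c * (x * u) = c * (A * v) := by rw [← mul_assoc, ← mul_assoc, hu, hv]
  have hxu : x * u = A * v := h.mul_left_cancel _ _ _ this
  obtain ⟨r, hr⟩ := hmin (x * u) ⟨u, rfl⟩ ⟨v, hxu.symm ▸ rfl⟩
  exact ⟨r, by rw [mul_assoc, hr, ← mul_assoc, hu]⟩

theorem llcm_mul_right (h : IsGcdMon M) {x A m : M} (hm : IsLeftLcm x A m) (c : M) :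
    IsLeftLcm (x * c) (A * c) (m * c) := by
  obtain ⟨⟨s, hs⟩, ⟨t, ht⟩, hmin⟩ := hm
  refine ⟨⟨s, by rw [← mul_assoc, hs]⟩, ⟨t, by rw [← mul_assoc, ht]⟩, fun m' ⟨u, hu⟩ ⟨v, hv⟩ => ?_⟩
  have : (u * x) * c = (v * A) * c := by rw [mul_assoc, mul_assoc, hu, hv]
  have hxu : u * x = v * A := h.mul_right_cancel _ _ _ this
  obtain ⟨r, hr⟩ := hmin (u * x) ⟨u, rfl⟩ ⟨v, hxu.symm ▸ rfl⟩
  exact ⟨r, by rw [← mul_assoc, hr, mul_assoc, hu]⟩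

theorem llcm_of_rightDvd {w v : M} (hd : RightDvd w v) : IsLeftLcm w v v :=
  ⟨hd, ⟨1, one_mul v⟩, fun _ _ hv => hv⟩

theorem rlcm_of_leftDvd {w v : M} (hd : LeftDvd w v) : IsRightLcm w v v :=
  ⟨hd, ⟨1, mul_one v⟩, fun _ _ hv => hv⟩


-- ==================== termination ====================

def DRel (M : Type*) [Monoid M] (k : ℕ) : M → M → Prop :=
  if k % 2 = 0 then PLDvd else PRDvd

inductive RL (M : Type*) [Monoid M] : ℕ → List M → List M → Prop
  | head {k : ℕ} {x y : M} {l l' : List M} :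
      DRel M k x y → l.length = l'.length → RL M k (x :: l) (y :: l')
  | tail {k : ℕ} {x : M} {l l' : List M} :
      RL M (k - 1) l l' → RL M k (x :: l) (x :: l')

theorem DRel_wf (hn : Noeth M) (k : ℕ) : WellFounded (DRel M k) := by
  unfold DRel; split
  · exact hn.1
  · exact hn.2

theorem RL_length {k : ℕ} {l l' : List M} (hr : RL M k l l') :
    l.length = l'.length := by
  induction hr with
  | head hd hl => simpa using hl
  | tail _ ih => simpa using ih

theorem RL_acc (hn : Noeth M) : ∀ (n k : ℕ) (l : List M), l.length = n → Acc (RL M k) l := by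
  intro n
  induction n with
  | zero =>
    intro k l hl
    rw [List.length_eq_zero_iff] at hl
    subst hl
    exact ⟨[], fun b hb => by cases hb⟩
  | succ n ih =>
    intro k l hl
    match l with
    | y :: t =>
      have ht : t.length = n := by simpa using hl
      clear hl
      revert t
      refine (DRel_wf hn k).induction
        (C := fun y => ∀ t : List M, t.length = n → Acc (RL M k) (y :: t)) y ?_
      intro y IHy t ht
      have hacc : Acc (RL M (k - 1)) t := ih (k - 1) t ht
      clear ih
      revert ht
      induction hacc with
      | intro t _ IHt =>
        intro ht
        constructor
        intro b hb
        cases hb with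
        | head hd hlen => exact IHy _ hd _ (hlen.trans ht)
        | tail htl => exact IHt _ htl ((RL_length htl).trans ht)

/-- `Red` as a relation to be proven terminating: `RedInv b a ↔ Red a b`. -/
def RedInv (b a : List M) : Prop := Red a b

def RLMeasure (b a : List M) : Prop := RL M a.length b.reverse a.reverse

theorem RLMeasure_wf (hn : Noeth M) : WellFounded (RLMeasure (M := M)) := by
  constructor
  intro a
  have key : ∀ (n : ℕ) (v : List M), Acc (RL M n) v → v.length = n → ∀ a : List M,
      a.reverse = v → Acc (RLMeasure (M := M)) a := by
    intro n v hacc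
    induction hacc with
    | intro v _ IH =>
      intro hv a hav
      constructor
      intro b hb
      unfold RLMeasure at hb
      have hlen : a.length = n := by rw [← hv, ← hav]; simp
      rw [hlen, hav] at hb
      exact IH b.reverse hb ((RL_length hb).trans hv) b rfl
  exact key a.length a.reverse (RL_acc hn a.length a.length a.reverse (by simp)) (by simp) a rfl


theorem RL_peel {k : ℕ} {l l' : List M} (hr : RL M k l l') :
    ∀ c : List M, RL M (k + c.length) (c ++ l) (c ++ l') := by
  intro c
  induction c with
  | nil => simpa using hr
  | cons z c ih =>
    have h1 : RL M (k + (z :: c).length - 1) (c ++ l) (c ++ l') := by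
      have he : k + (z :: c).length - 1 = k + c.length := by
        simp only [List.length_cons]; omega
      rw [he]; exact ih
    exact RL.tail h1

theorem RL_parts {p s : List M} {u v w u' v' w' : M}
    (hd : DRel M (p.length + 3) w' w) :
    RL M (p ++ u::v::w::s).length ((p ++ u'::v'::w'::s).reverse)
      ((p ++ u::v::w::s).reverse) := by
  have base : RL M (p.length + 3) (w' :: v' :: u' :: p.reverse) (w :: v :: u :: p.reverse) :=
    RL.head hd (by simp)
  have peel := RL_peel base s.reverse
  have e1 : (p ++ u::v::w::s).reverse = s.reverse ++ w::v::u::p.reverse := by simp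
  have e2 : (p ++ u'::v'::w'::s).reverse = s.reverse ++ w'::v'::u'::p.reverse := by simp
  have e3 : (p ++ u::v::w::s).length = p.length + 3 + s.reverse.length := by simp; omega
  rw [e1, e2, e3]; exact peel

theorem RL_pair {s : List M} {u v u' v' : M} (hd : DRel M 2 v' v) :
    RL M (u::v::s).length ((u'::v'::s).reverse) ((u::v::s).reverse) := by
  have base : RL M 2 (v' :: [u']) (v :: [u]) := RL.head hd (by simp)
  have peel := RL_peel base s.reverse
  have e1 : (u::v::s).reverse = s.reverse ++ v::[u] := by simp
  have e2 : (u'::v'::s).reverse = s.reverse ++ v'::[u'] := by simp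
  have e3 : (u::v::s).length = 2 + s.reverse.length := by simp; omega
  rw [e1, e2, e3]; exact peel

theorem red_RLMeasure (h : ∀ x : M, IsUnit x → x = 1) {a b : List M} (hr : Red a b) :
    RLMeasure b a := by
  obtain ⟨i, x, hx, hc⟩ := hr
  have hxu : ¬ IsUnit x := fun hu => hx (h x hu)
  unfold RLMeasure
  rcases hc with ⟨hi, a₁, a₂, b₁, b₂, s, ha, hb, h1, h2⟩ |
    ⟨hi, hp, p, s, am, ai, ap, bi, bp, x', hlen, ha, hb, hlcm, he, hdiv⟩ |
    ⟨hi, hp, p, s, am, ai, ap, bi, bp, x', hlen, ha, hb, hlcm, he, hdiv⟩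
  · subst ha hb
    refine RL_pair ?_
    have h2' : (2 : ℕ) % 2 = 0 := rfl
    unfold DRel
    simp only [h2', if_pos rfl]
    exact ⟨x, hxu, h2⟩
  · subst ha hb
    refine RL_parts ?_
    have hpar : (p.length + 3) % 2 = 1 := by omega
    unfold DRel
    rw [hpar]
    simp only [one_ne_zero, if_false]
    exact ⟨x, hxu, hdiv⟩
  · subst ha hb
    refine RL_parts ?_
    have hpar : (p.length + 3) % 2 = 0 := by omega
    unfold DRel
    rw [hpar]
    simp only [if_pos rfl]
    exact ⟨x, hxu, hdiv⟩

theorem redInv_wf (h : ∀ x : M, IsUnit x → x = 1) (hn : Noeth M) :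
    WellFounded (RedInv (M := M)) :=
  Subrelation.wf (fun hr => red_RLMeasure h hr) (RLMeasure_wf hn)

theorem no_infinite_chain (h : ∀ x : M, IsUnit x → x = 1) (hn : Noeth M)
    (f : ℕ → List M) : ¬ (∀ n : ℕ, Red (f n) (f (n + 1))) := by
  intro hf
  have key : ∀ a : List M, ∀ n, f n = a → False := by
    intro a
    induction (redInv_wf h hn).apply a with
    | intro a _ IH =>
      intro n hna
      exact IH (f (n + 1)) (show RedInv (f (n+1)) a from hna ▸ hf n) (n + 1) rfl
  exact key (f 0) 0 rfl

-- ==================== step constructors ====================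

theorem red_one {a₁ a₂ b₁ b₂ : M} (s : List M) {x : M} (hx : x ≠ 1)
    (h1 : b₁ * x = a₁) (h2 : b₂ * x = a₂) : Red (a₁ :: a₂ :: s) (b₁ :: b₂ :: s) :=
  ⟨1, x, hx, Or.inl ⟨rfl, a₁, a₂, b₁, b₂, s, rfl, rfl, h1, h2⟩⟩

theorem red_even {p : List M} (hp : p.length % 2 = 0) (s : List M)
    {x am ai ap bi bp x' : M} (hx : x ≠ 1)
    (hlcm : IsRightLcm x ai (x * bi)) (he : x * bi = ai * x') (hd : x * bp = ap) :
    Red (p ++ am :: ai :: ap :: s) (p ++ (am * x') :: bi :: bp :: s) :=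
  ⟨p.length + 2, x, hx, Or.inr (Or.inl ⟨by omega, by omega,
    p, s, am, ai, ap, bi, bp, x', by omega, rfl, rfl, hlcm, he, hd⟩)⟩

theorem red_odd {p : List M} (hp : p.length % 2 = 1) (s : List M)
    {x am ai ap bi bp x' : M} (hx : x ≠ 1)
    (hlcm : IsLeftLcm x ai (bi * x)) (he : bi * x = x' * ai) (hd : bp * x = ap) :
    Red (p ++ am :: ai :: ap :: s) (p ++ (x' * am) :: bi :: bp :: s) :=
  ⟨p.length + 2, x, hx, Or.inr (Or.inr ⟨by omega, by omega,
    p, s, am, ai, ap, bi, bp, x', by omega, rfl, rfl, hlcm, he, hd⟩)⟩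

theorem red_cases {a b : List M} (hr : Red a b) :
    (∃ (a₁ a₂ b₁ b₂ : M) (s : List M) (x : M), x ≠ 1 ∧
      a = a₁ :: a₂ :: s ∧ b = b₁ :: b₂ :: s ∧ b₁ * x = a₁ ∧ b₂ * x = a₂) ∨
    (∃ (p s : List M) (x am ai ap bi bp x' : M), p.length % 2 = 0 ∧ x ≠ 1 ∧
      a = p ++ am :: ai :: ap :: s ∧ b = p ++ (am * x') :: bi :: bp :: s ∧
      IsRightLcm x ai (x * bi) ∧ x * bi = ai * x' ∧ x * bp = ap) ∨
    (∃ (p s : List M) (x am ai ap bi bp x' : M), p.length % 2 = 1 ∧ x ≠ 1 ∧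
      a = p ++ am :: ai :: ap :: s ∧ b = p ++ (x' * am) :: bi :: bp :: s ∧
      IsLeftLcm x ai (bi * x) ∧ bi * x = x' * ai ∧ bp * x = ap) := by
  obtain ⟨i, x, hx, hc⟩ := hr
  rcases hc with ⟨hi, a₁, a₂, b₁, b₂, s, ha, hb, h1, h2⟩ |
    ⟨hi, hpar, p, s, am, ai, ap, bi, bp, x', hlen, ha, hb, hlcm, he, hd⟩ |
    ⟨hi, hpar, p, s, am, ai, ap, bi, bp, x', hlen, ha, hb, hlcm, he, hd⟩
  · exact Or.inl ⟨a₁, a₂, b₁, b₂, s, x, hx, ha, hb, h1, h2⟩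
  · exact Or.inr (Or.inl ⟨p, s, x, am, ai, ap, bi, bp, x', by omega, hx, ha, hb, hlcm, he, hd⟩)
  · exact Or.inr (Or.inr ⟨p, s, x, am, ai, ap, bi, bp, x', by omega, hx, ha, hb, hlcm, he, hd⟩)

-- ==================== Newman's lemma ====================

def Joinable (a b : List M) : Prop := ∃ c, RedStar a c ∧ RedStar b c

theorem Joinable.symm {a b : List M} (hj : Joinable a b) : Joinable b a :=
  let ⟨c, h1, h2⟩ := hj; ⟨c, h2, h1⟩

theorem newman (hwf : WellFounded (RedInv (M := M)))
    (hlc : ∀ a b c : List M, Red a b → Red a c → Joinable b c) :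
    ∀ a b c : List M, RedStar a b → RedStar a c → Joinable b c := by
  intro a
  induction hwf.apply a with
  | intro a _ IH =>
    intro b c hab hac
    rcases hab.cases_head with rfl | ⟨b₁, hab₁, hb₁b⟩
    · exact ⟨c, hac, Relation.ReflTransGen.refl⟩
    rcases hac.cases_head with rfl | ⟨c₁, hac₁, hc₁c⟩
    · exact ⟨b, Relation.ReflTransGen.refl, Relation.ReflTransGen.head hab₁ hb₁b⟩
    obtain ⟨d, hbd, hcd⟩ := hlc a b₁ c₁ hab₁ hac₁
    obtain ⟨e, hbe, hde⟩ := IH b₁ hab₁ b d hb₁b hbd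
    obtain ⟨f, hcf, hef⟩ := IH c₁ hac₁ c e hc₁c (hcd.trans hde)
    exact ⟨f, hbe.trans hef, hcf⟩

theorem nf_exists (hwf : WellFounded (RedInv (M := M))) :
    ∀ a : List M, ∃ b, RedStar a b ∧ RIrred b := by
  intro a
  induction hwf.apply a with
  | intro a _ IH =>
    by_cases hex : ∃ a', Red a a'
    · obtain ⟨a', ha'⟩ := hex
      obtain ⟨b, hb1, hb2⟩ := IH a' ha'
      exact ⟨b, Relation.ReflTransGen.head ha' hb1, hb2⟩
    · push_neg at hex
      exact ⟨a, Relation.ReflTransGen.refl, fun b hb => hex b hb⟩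

theorem star_irred {b c : List M} (hb : RIrred b) (hs : RedStar b c) : b = c := by
  rcases hs.cases_head with rfl | ⟨d, hd, _⟩
  · rfl
  · exact absurd hd (hb d)


-- ==================== local confluence: case lemmas ====================

theorem append_decomp {α : Type*} {p₁ p₂ l₁ l₂ : List α} (he : p₁ ++ l₁ = p₂ ++ l₂)
    (hle : p₁.length ≤ p₂.length) : ∃ t, p₂ = p₁ ++ t ∧ l₁ = t ++ l₂ := by
  rcases List.append_eq_append_iff.1 he with ⟨t, h1, h2⟩ | ⟨t, h1, h2⟩
  · exact ⟨t, h1, h2⟩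
  · have hl := congrArg List.length h1
    simp only [List.length_append] at hl
    have ht : t = [] := List.length_eq_zero_iff.1 (by omega)
    subst ht
    simp only [List.append_nil] at h1
    simp only [List.nil_append] at h2
    exact ⟨[], by simp [h1], by simp [h2]⟩

/-- Disjoint windows commute. -/
theorem lc_far {q w w' mid s₂ : List M} {u v z u' v' z' : M}
    (hσ : ∀ r, Red (q ++ (w ++ r)) (q ++ (w' ++ r)))
    (hlen : w.length = w'.length)
    (hτ : ∀ p' : List M, p'.length = (q ++ w ++ mid).length →
      Red (p' ++ u :: v :: z :: s₂) (p' ++ u' :: v' :: z' :: s₂)) :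
    Joinable (q ++ (w' ++ (mid ++ u :: v :: z :: s₂)))
      ((q ++ w ++ mid) ++ u' :: v' :: z' :: s₂) := by
  refine ⟨q ++ (w' ++ (mid ++ u' :: v' :: z' :: s₂)), Relation.ReflTransGen.single ?_,
    Relation.ReflTransGen.single ?_⟩
  · have := hτ (q ++ w' ++ mid) (by simp [hlen])
    simpa [List.append_assoc] using this
  · have := hσ (mid ++ u' :: v' :: z' :: s₂)
    simpa [List.append_assoc] using this

theorem lc_D1 (h : IsGcdMon M) (hn : Noeth M) {s : List M} {A₁ A₂ a₁ a₂ c₁ c₂ x y : M}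
    (hx : x ≠ 1) (hy : y ≠ 1) (ha1 : a₁ * x = A₁) (ha2 : a₂ * x = A₂)
    (hc1 : c₁ * y = A₁) (hc2 : c₂ * y = A₂) :
    Joinable (a₁ :: a₂ :: s) (c₁ :: c₂ :: s) := by
  obtain ⟨z, hz⟩ := exists_llcm h hn ⟨A₁, ⟨a₁, ha1⟩, ⟨c₁, hc1⟩⟩
  obtain ⟨u, hu⟩ := hz.1
  obtain ⟨v, hv⟩ := hz.2.1
  obtain ⟨e₁, he₁⟩ := hz.2.2 A₁ ⟨a₁, ha1⟩ ⟨c₁, hc1⟩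
  obtain ⟨e₂, he₂⟩ := hz.2.2 A₂ ⟨a₂, ha2⟩ ⟨c₂, hc2⟩
  have ha₁ : (e₁ * u) * x = A₁ := by rw [mul_assoc, hu, he₁]
  have ha₂ : (e₂ * u) * x = A₂ := by rw [mul_assoc, hu, he₂]
  have hcc₁ : (e₁ * v) * y = A₁ := by rw [mul_assoc, hv, he₁]
  have hcc₂ : (e₂ * v) * y = A₂ := by rw [mul_assoc, hv, he₂]
  have ea₁ : a₁ = e₁ * u := h.mul_right_cancel x _ _ (by rw [ha1, ha₁])
  have ea₂ : a₂ = e₂ * u := h.mul_right_cancel x _ _ (by rw [ha2, ha₂])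
  have ec₁ : c₁ = e₁ * v := h.mul_right_cancel y _ _ (by rw [hc1, hcc₁])
  have ec₂ : c₂ = e₂ * v := h.mul_right_cancel y _ _ (by rw [hc2, hcc₂])
  refine ⟨e₁ :: e₂ :: s, ?_, ?_⟩
  · by_cases hu1 : u = 1
    · subst hu1
      rw [ea₁, ea₂, mul_one, mul_one]
      exact Relation.ReflTransGen.refl
    · exact Relation.ReflTransGen.single (red_one s hu1 ea₁.symm ea₂.symm)
  · by_cases hv1 : v = 1
    · subst hv1
      rw [ec₁, ec₂, mul_one, mul_one]
      exact Relation.ReflTransGen.refl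
    · exact Relation.ReflTransGen.single (red_one s hv1 ec₁.symm ec₂.symm)

theorem lc_C0 (h : IsGcdMon M) (hn : Noeth M) {s : List M}
    {A' B C a' b' x y γ yb δ : M} (hx : x ≠ 1) (hy : y ≠ 1)
    (h1 : a' * x = A') (h2 : b' * x = B)
    (hlcm : IsRightLcm y B (y * γ)) (he : y * γ = B * yb) (hd : y * δ = C) :
    Joinable (a' :: b' :: C :: s) ((A' * yb) :: γ :: δ :: s) := by
  have hcm : LeftDvd b' (y * γ) := ⟨x * yb, by rw [he, ← h2, mul_assoc]⟩
  obtain ⟨L, hL⟩ := exists_rlcm h hn ⟨y * γ, ⟨γ, rfl⟩, hcm⟩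
  obtain ⟨γ₁, hγ₁⟩ := hL.1
  obtain ⟨βb, hβb⟩ := hL.2.1
  obtain ⟨ε, hε⟩ := hL.2.2 (y * γ) ⟨γ, rfl⟩ hcm
  have hγ : γ₁ * ε = γ := by
    apply h.mul_left_cancel y
    rw [← mul_assoc, hγ₁, hε]
  have hβε : βb * ε = x * yb := by
    apply h.mul_left_cancel b'
    rw [← mul_assoc, hβb, hε, he, ← h2, mul_assoc]
  have hred1 : Red (a' :: b' :: C :: s) ((a' * βb) :: γ₁ :: δ :: s) := by
    have := red_even (p := []) (by simp) s (x := y) hy (am := a') (ai := b') (ap := C)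
        (bi := γ₁) (bp := δ) (x' := βb) (by rw [hγ₁]; exact hL) (by rw [hγ₁, hβb]) hd
    simpa using this
  refine ⟨(a' * βb) :: γ₁ :: δ :: s, Relation.ReflTransGen.single hred1, ?_⟩
  by_cases hε1 : ε = 1
  · subst hε1
    rw [mul_one] at hγ hβε
    have : A' * yb = a' * βb := by rw [← h1, mul_assoc, ← hβε]
    rw [this, hγ]
    exact Relation.ReflTransGen.refl
  · refine Relation.ReflTransGen.single (red_one (δ :: s) hε1 ?_ ?_)
    · rw [mul_assoc, hβε, ← h1, mul_assoc]
    · exact hγ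

theorem lc_B1 {s : List M} {A₁ A₂ A₃ A₄ a₁ a₂ γ yb δ x y : M}
    (hx : x ≠ 1) (hy : y ≠ 1) (h1 : a₁ * x = A₁) (h2 : a₂ * x = A₂)
    (hlcm : IsLeftLcm y A₃ (γ * y)) (he : γ * y = yb * A₃) (hd : δ * y = A₄) :
    Joinable (a₁ :: a₂ :: A₃ :: A₄ :: s) (A₁ :: (yb * A₂) :: γ :: δ :: s) := by
  refine ⟨a₁ :: (yb * a₂) :: γ :: δ :: s, Relation.ReflTransGen.single ?_,
    Relation.ReflTransGen.single ?_⟩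
  · have := red_odd (p := [a₁]) (by simp) s hy (am := a₂) hlcm he hd
    simpa using this
  · exact red_one (γ :: δ :: s) hx h1 (by rw [mul_assoc, h2])

theorem lc_Be {p s : List M} (hp : p.length % 2 = 0)
    {am ai ap c d x y bi bp x' ci cp y' : M} (hx : x ≠ 1) (hy : y ≠ 1)
    (hlcm : IsRightLcm x ai (x * bi)) (he : x * bi = ai * x') (hd : x * bp = ap)
    (hlcm' : IsRightLcm y c (y * ci)) (he' : y * ci = c * y') (hd' : y * cp = d) :
    Joinable (p ++ (am * x') :: bi :: bp :: c :: d :: s)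
      (p ++ am :: ai :: (ap * y') :: ci :: cp :: s) := by
  refine ⟨p ++ (am * x') :: bi :: (bp * y') :: ci :: cp :: s,
    Relation.ReflTransGen.single ?_, Relation.ReflTransGen.single ?_⟩
  · have := red_even (p := p ++ [am * x', bi]) (by simp; omega) s hy (am := bp)
      hlcm' he' hd'
    simpa [List.append_assoc] using this
  · exact red_even hp (ci :: cp :: s) hx hlcm he (by rw [← mul_assoc, hd])

theorem lc_Bo {p s : List M} (hp : p.length % 2 = 1)
    {am ai ap c d x y bi bp x' ci cp y' : M} (hx : x ≠ 1) (hy : y ≠ 1)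
    (hlcm : IsLeftLcm x ai (bi * x)) (he : bi * x = x' * ai) (hd : bp * x = ap)
    (hlcm' : IsLeftLcm y c (ci * y)) (he' : ci * y = y' * c) (hd' : cp * y = d) :
    Joinable (p ++ (x' * am) :: bi :: bp :: c :: d :: s)
      (p ++ am :: ai :: (y' * ap) :: ci :: cp :: s) := by
  refine ⟨p ++ (x' * am) :: bi :: (y' * bp) :: ci :: cp :: s,
    Relation.ReflTransGen.single ?_, Relation.ReflTransGen.single ?_⟩
  · have := red_odd (p := p ++ [x' * am, bi]) (by simp; omega) s hy (am := bp)
      hlcm' he' hd'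
    simpa [List.append_assoc] using this
  · exact red_odd hp (ci :: cp :: s) hx hlcm he (by rw [mul_assoc, hd])

theorem lc_C1 (h : IsGcdMon M) (hn : Noeth M) {p s : List M} (hp : p.length % 2 = 0)
    {m A B C x y α xb β γ yb δ : M} (hx : x ≠ 1) (hy : y ≠ 1)
    (hlcmx : IsRightLcm x A (x * α)) (hex : x * α = A * xb) (hdx : x * β = B)
    (hlcmy : IsLeftLcm y B (γ * y)) (hey : γ * y = yb * B) (hdy : δ * y = C) :
    Joinable (p ++ (m * xb) :: α :: β :: C :: s) (p ++ m :: (yb * A) :: γ :: δ :: s) := by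
  have hcmL : RightDvd β (γ * y) := ⟨yb * x, by rw [mul_assoc, hdx, hey]⟩
  obtain ⟨L, hL⟩ := exists_llcm h hn ⟨γ * y, ⟨γ, rfl⟩, hcmL⟩
  obtain ⟨γ₁, hγ₁⟩ := hL.1
  obtain ⟨βb, hβb⟩ := hL.2.1
  obtain ⟨ε, hε⟩ := hL.2.2 (γ * y) ⟨γ, rfl⟩ hcmL
  have hγ : ε * γ₁ = γ := by
    apply h.mul_right_cancel y
    rw [mul_assoc, hγ₁, hε]
  have hβε : ε * βb = yb * x := by
    apply h.mul_right_cancel β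
    rw [mul_assoc, hβb, hε, mul_assoc, hdx]
    exact hey
  have hred1 : Red (p ++ (m * xb) :: α :: β :: C :: s)
      (p ++ (m * xb) :: (βb * α) :: γ₁ :: δ :: s) := by
    have := red_odd (p := p ++ [m * xb]) (by simp; omega) s hy (am := α)
      (by rw [hγ₁]; exact hL) (by rw [hγ₁, hβb]) hdy
    simpa [List.append_assoc] using this
  have hchain : ε * (βb * α) = (yb * A) * xb := by
    rw [← mul_assoc, hβε, mul_assoc, hex, ← mul_assoc]
  obtain ⟨K, hK⟩ := exists_rlcm h hn (⟨(yb * A) * xb, ⟨βb * α, hchain⟩, ⟨xb, rfl⟩⟩ :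
    CommonRightMul ε (yb * A))
  obtain ⟨bi₂, hbi₂⟩ := hK.1
  obtain ⟨xh, hxh⟩ := hK.2.1
  obtain ⟨w, hw⟩ := hK.2.2 ((yb * A) * xb) ⟨βb * α, hchain⟩ ⟨xb, rfl⟩
  have hxw : xh * w = xb := by
    apply h.mul_left_cancel (yb * A)
    rw [← mul_assoc, hxh, hw]
  have hbiw : bi₂ * w = βb * α := by
    apply h.mul_left_cancel ε
    rw [← mul_assoc, hbi₂, hw, ← hchain]
  refine ⟨p ++ (m * xh) :: bi₂ :: γ₁ :: δ :: s, Relation.ReflTransGen.head hred1 ?_, ?_⟩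
  · by_cases hw1 : w = 1
    · subst hw1
      rw [mul_one] at hxw hbiw
      simp only [hxw, hbiw]
      exact Relation.ReflTransGen.refl
    · rcases List.eq_nil_or_concat p with rfl | ⟨p', e, hpe⟩
      · exact Relation.ReflTransGen.single
          (red_one (γ₁ :: δ :: s) hw1 (by rw [mul_assoc, hxw]) hbiw)
      · rw [List.concat_eq_append] at hpe
        subst hpe
        refine Relation.ReflTransGen.single ?_
        have hmm : (m * xh) * w = m * xb := by rw [mul_assoc, hxw]
        have hstep := red_odd (p := p') (by simp at hp ⊢; omega) (γ₁ :: δ :: s) hw1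
          (am := e) (ai := m * xb) (bi := m * xh) (bp := bi₂) (x' := 1)
          (by rw [hmm]; exact llcm_of_rightDvd ⟨m * xh, hmm⟩)
          (by rw [hmm, one_mul]) hbiw
        simpa [List.append_assoc] using hstep
  · by_cases hε1 : ε = 1
    · subst hε1
      rw [one_mul] at hbi₂ hγ
      have hKv : K = yb * A :=
        rlcm_unique h hK (rlcm_of_leftDvd ⟨yb * A, one_mul _⟩)
      have hxh1 : xh = 1 := by
        apply h.mul_left_cancel (yb * A)
        rw [hxh, hKv, mul_one]
      simp only [hxh1, mul_one, hbi₂, hKv, hγ]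
      exact Relation.ReflTransGen.refl
    · exact Relation.ReflTransGen.single
        (red_even hp (δ :: s) hε1 (am := m) (by rw [hbi₂]; exact hK)
          (by rw [hbi₂, hxh]) hγ)

theorem lc_C2 (h : IsGcdMon M) (hn : Noeth M) {p s : List M} (hp : p.length % 2 = 1)
    {m A B C x y α xb β γ yb δ : M} (hx : x ≠ 1) (hy : y ≠ 1)
    (hlcmx : IsLeftLcm x A (α * x)) (hex : α * x = xb * A) (hdx : β * x = B)
    (hlcmy : IsRightLcm y B (y * γ)) (hey : y * γ = B * yb) (hdy : y * δ = C) :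
    Joinable (p ++ (xb * m) :: α :: β :: C :: s) (p ++ m :: (A * yb) :: γ :: δ :: s) := by
  have hcmL : LeftDvd β (y * γ) := ⟨x * yb, by rw [← mul_assoc, hdx, hey]⟩
  obtain ⟨L, hL⟩ := exists_rlcm h hn ⟨y * γ, ⟨γ, rfl⟩, hcmL⟩
  obtain ⟨γ₁, hγ₁⟩ := hL.1
  obtain ⟨βb, hβb⟩ := hL.2.1
  obtain ⟨ε, hε⟩ := hL.2.2 (y * γ) ⟨γ, rfl⟩ hcmL
  have hγ : γ₁ * ε = γ := by
    apply h.mul_left_cancel y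
    rw [← mul_assoc, hγ₁, hε]
  have hβε : βb * ε = x * yb := by
    apply h.mul_left_cancel β
    rw [← mul_assoc, hβb, hε, ← mul_assoc, hdx]
    exact hey
  have hred1 : Red (p ++ (xb * m) :: α :: β :: C :: s)
      (p ++ (xb * m) :: (α * βb) :: γ₁ :: δ :: s) := by
    have := red_even (p := p ++ [xb * m]) (by simp; omega) s hy (am := α)
      (by rw [hγ₁]; exact hL) (by rw [hγ₁, hβb]) hdy
    simpa [List.append_assoc] using this
  have hchain : (α * βb) * ε = xb * (A * yb) := by
    rw [mul_assoc, hβε, ← mul_assoc, hex, mul_assoc]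
  obtain ⟨K, hK⟩ := exists_llcm h hn (⟨xb * (A * yb), ⟨α * βb, hchain⟩, ⟨xb, rfl⟩⟩ :
    CommonLeftMul ε (A * yb))
  obtain ⟨bi₂, hbi₂⟩ := hK.1
  obtain ⟨xh, hxh⟩ := hK.2.1
  obtain ⟨w, hw⟩ := hK.2.2 (xb * (A * yb)) ⟨α * βb, hchain⟩ ⟨xb, rfl⟩
  have hxw : w * xh = xb := by
    apply h.mul_right_cancel (A * yb)
    rw [mul_assoc, hxh, hw]
  have hbiw : w * bi₂ = α * βb := by
    apply h.mul_right_cancel ε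
    rw [mul_assoc, hbi₂, hw, ← hchain]
  refine ⟨p ++ (xh * m) :: bi₂ :: γ₁ :: δ :: s, Relation.ReflTransGen.head hred1 ?_, ?_⟩
  · by_cases hw1 : w = 1
    · subst hw1
      rw [one_mul] at hxw hbiw
      simp only [hxw, hbiw]
      exact Relation.ReflTransGen.refl
    · obtain ⟨p', e, rfl⟩ : ∃ p' e, p = p' ++ [e] := by
        rcases List.eq_nil_or_concat p with rfl | ⟨p', e, hpe⟩
        · simp at hp
        · exact ⟨p', e, by rw [hpe, List.concat_eq_append]⟩
      refine Relation.ReflTransGen.single ?_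
      have hmm : w * (xh * m) = xb * m := by rw [← mul_assoc, hxw]
      have hstep := red_even (p := p') (by simp at hp ⊢; omega) (γ₁ :: δ :: s) hw1
        (am := e) (ai := xb * m) (bi := xh * m) (bp := bi₂) (x' := 1)
        (by rw [hmm]; exact rlcm_of_leftDvd ⟨xh * m, hmm⟩)
        (by rw [hmm, mul_one]) hbiw
      simpa [List.append_assoc] using hstep
  · by_cases hε1 : ε = 1
    · subst hε1
      rw [mul_one] at hbi₂ hγ
      have hKv : K = A * yb :=
        llcm_unique h hK (llcm_of_rightDvd ⟨A * yb, mul_one _⟩)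
      have hxh1 : xh = 1 := by
        apply h.mul_right_cancel (A * yb)
        rw [hxh, hKv, one_mul]
      simp only [hxh1, one_mul, hbi₂, hKv, hγ]
      exact Relation.ReflTransGen.refl
    · exact Relation.ReflTransGen.single
        (red_odd hp (δ :: s) hε1 (am := m) (by rw [hbi₂]; exact hK)
          (by rw [hbi₂, hxh]) hγ)

theorem De_side (h : IsGcdMon M) (hn : Noeth M) {p s : List M} (hp : p.length % 2 = 0)
    {x u z am ai ap bi bp x' C zb t : M} (hx : x ≠ 1)
    (hlcm : IsRightLcm x ai (x * bi)) (he : x * bi = ai * x') (hd : x * bp = ap)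
    (hK : IsRightLcm z ai (z * C)) (hKe : z * C = ai * zb)
    (hz : z = x * u) (ht : z * t = ap) :
    RedStar (p ++ (am * x') :: bi :: bp :: s) (p ++ (am * zb) :: C :: t :: s) := by
  have hbp : bp = u * t := by
    apply h.mul_left_cancel x
    rw [hd, ← ht, hz, mul_assoc]
  by_cases hu1 : u = 1
  · subst hu1
    rw [mul_one] at hz
    rw [hz] at hK hKe ht
    have hCb : x * C = x * bi := rlcm_unique h hK hlcm
    have hC : C = bi := h.mul_left_cancel x _ _ hCb
    have hzb : zb = x' := by
      apply h.mul_left_cancel ai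
      rw [← hKe, hCb, he]
    rw [one_mul] at hbp
    simp only [hC, hzb, ← hbp]
    exact Relation.ReflTransGen.refl
  · obtain ⟨s₁, hs₁⟩ := hlcm.2.2 (z * C) ⟨u * C, by rw [hz, mul_assoc]⟩ ⟨zb, hKe.symm⟩
    have hbis : bi * s₁ = u * C := by
      apply h.mul_left_cancel x
      rw [← mul_assoc, hs₁, hz, mul_assoc]
    obtain ⟨L₁, hL₁⟩ := exists_rlcm h hn (⟨u * C, ⟨C, rfl⟩, ⟨s₁, hbis⟩⟩ : CommonRightMul u bi)
    obtain ⟨c₁, hc₁⟩ := hL₁.1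
    obtain ⟨u₁, hu₁⟩ := hL₁.2.1
    have hKlcm : IsRightLcm z ai (x * L₁) := by
      refine ⟨⟨c₁, ?_⟩, ⟨x' * u₁, ?_⟩, ?_⟩
      · rw [hz, mul_assoc, hc₁]
      · rw [← mul_assoc, ← he, mul_assoc, hu₁]
      · rintro m' ⟨e, hee⟩ ⟨f, hf⟩
        obtain ⟨r, hr⟩ := hlcm.2.2 m' ⟨u * e, by rw [← mul_assoc, ← hz, hee]⟩ ⟨f, hf⟩
        have hber : bi * r = u * e := by
          apply h.mul_left_cancel x
          rw [← mul_assoc, hr, ← hee, hz, mul_assoc]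
        obtain ⟨r₂, hr₂⟩ := hL₁.2.2 (bi * r) ⟨e, hber.symm⟩ ⟨r, rfl⟩
        exact ⟨r₂, by rw [mul_assoc, hr₂, ← mul_assoc, hr]⟩
    have hxL : x * L₁ = z * C := rlcm_unique h hKlcm hK
    have hC : c₁ = C := by
      apply h.mul_left_cancel z
      rw [hz, mul_assoc, hc₁, hxL, hz]
    have hzbe : x' * u₁ = zb := by
      apply h.mul_left_cancel ai
      rw [← mul_assoc, ← he, mul_assoc, hu₁, hxL, hKe]
    refine Relation.ReflTransGen.single ?_
    have hstep := red_even hp s hu1 (am := am * x') (ai := bi) (bi := c₁) (bp := t) (x' := u₁)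
      (by rw [hc₁]; exact hL₁) (by rw [hc₁, hu₁]) hbp.symm
    have hmm : (am * x') * u₁ = am * zb := by rw [mul_assoc, hzbe]
    rw [hmm, hC] at hstep
    exact hstep

theorem lc_De (h : IsGcdMon M) (hn : Noeth M) (ho : ThreeOre M)
    {p s : List M} (hp : p.length % 2 = 0)
    {am ai ap x y bi bp x' ci cp y' : M} (hx : x ≠ 1) (hy : y ≠ 1)
    (hlcm : IsRightLcm x ai (x * bi)) (he : x * bi = ai * x') (hd : x * bp = ap)
    (hlcm' : IsRightLcm y ai (y * ci)) (he' : y * ci = ai * y') (hd' : y * cp = ap) :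
    Joinable (p ++ (am * x') :: bi :: bp :: s) (p ++ (am * y') :: ci :: cp :: s) := by
  obtain ⟨z, hz⟩ := exists_rlcm h hn ⟨ap, ⟨bp, hd⟩, ⟨cp, hd'⟩⟩
  obtain ⟨m₃, hm1, hm2, hm3⟩ := ho.1 x y ai ⟨ap, ⟨bp, hd⟩, ⟨cp, hd'⟩⟩
    ⟨x * bi, ⟨bi, rfl⟩, ⟨x', he.symm⟩⟩ ⟨y * ci, ⟨ci, rfl⟩, ⟨y', he'.symm⟩⟩
  obtain ⟨K, hK⟩ := exists_rlcm h hn ⟨m₃, hz.2.2 m₃ hm1 hm2, hm3⟩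
  obtain ⟨C, hC⟩ := hK.1
  obtain ⟨zb, hzb⟩ := hK.2.1
  obtain ⟨t, ht⟩ := hz.2.2 ap ⟨bp, hd⟩ ⟨cp, hd'⟩
  obtain ⟨u, hu⟩ := hz.1
  obtain ⟨v, hv⟩ := hz.2.1
  have hKlcm : IsRightLcm z ai (z * C) := by rw [hC]; exact hK
  have hKe : z * C = ai * zb := by rw [hC, hzb]
  exact ⟨p ++ (am * zb) :: C :: t :: s,
    De_side h hn hp hx hlcm he hd hKlcm hKe hu.symm ht,
    De_side h hn hp hy hlcm' he' hd' hKlcm hKe hv.symm ht⟩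

theorem Do_side (h : IsGcdMon M) (hn : Noeth M) {p s : List M} (hp : p.length % 2 = 1)
    {x u z am ai ap bi bp x' C zb t : M} (hx : x ≠ 1)
    (hlcm : IsLeftLcm x ai (bi * x)) (he : bi * x = x' * ai) (hd : bp * x = ap)
    (hK : IsLeftLcm z ai (C * z)) (hKe : C * z = zb * ai)
    (hz : z = u * x) (ht : t * z = ap) :
    RedStar (p ++ (x' * am) :: bi :: bp :: s) (p ++ (zb * am) :: C :: t :: s) := by
  have hbp : bp = t * u := by
    apply h.mul_right_cancel x
    rw [hd, ← ht, hz, ← mul_assoc]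
  by_cases hu1 : u = 1
  · subst hu1
    rw [one_mul] at hz
    rw [hz] at hK hKe ht
    have hCb : C * x = bi * x := llcm_unique h hK hlcm
    have hC : C = bi := h.mul_right_cancel x _ _ hCb
    have hzb : zb = x' := by
      apply h.mul_right_cancel ai
      rw [← hKe, hCb, he]
    rw [mul_one] at hbp
    simp only [hC, hzb, ← hbp]
    exact Relation.ReflTransGen.refl
  · obtain ⟨s₁, hs₁⟩ := hlcm.2.2 (C * z) ⟨C * u, by rw [mul_assoc, ← hz]⟩ ⟨zb, hKe.symm⟩
    have hbis : s₁ * bi = C * u := by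
      apply h.mul_right_cancel x
      rw [mul_assoc, hs₁, hz, ← mul_assoc]
    obtain ⟨L₁, hL₁⟩ := exists_llcm h hn (⟨C * u, ⟨C, rfl⟩, ⟨s₁, hbis⟩⟩ : CommonLeftMul u bi)
    obtain ⟨c₁, hc₁⟩ := hL₁.1
    obtain ⟨u₁, hu₁⟩ := hL₁.2.1
    have hKlcm : IsLeftLcm z ai (L₁ * x) := by
      refine ⟨⟨c₁, ?_⟩, ⟨u₁ * x', ?_⟩, ?_⟩
      · rw [hz, ← mul_assoc, hc₁]
      · rw [mul_assoc, ← he, ← mul_assoc, hu₁]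
      · rintro m' ⟨e, hee⟩ ⟨f, hf⟩
        obtain ⟨r, hr⟩ := hlcm.2.2 m' ⟨e * u, by rw [mul_assoc, ← hz, hee]⟩ ⟨f, hf⟩
        have hber : r * bi = e * u := by
          apply h.mul_right_cancel x
          rw [mul_assoc, hr, ← hee, hz, ← mul_assoc]
        obtain ⟨r₂, hr₂⟩ := hL₁.2.2 (r * bi) ⟨e, hber.symm⟩ ⟨r, rfl⟩
        exact ⟨r₂, by rw [← mul_assoc, hr₂, mul_assoc, hr]⟩
    have hxL : L₁ * x = C * z := llcm_unique h hKlcm hK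
    have hC : c₁ = C := by
      apply h.mul_right_cancel z
      rw [hz, ← mul_assoc, hc₁, hxL, hz]
    have hzbe : u₁ * x' = zb := by
      apply h.mul_right_cancel ai
      rw [mul_assoc, ← he, ← mul_assoc, hu₁, hxL, hKe]
    refine Relation.ReflTransGen.single ?_
    have hstep := red_odd hp s hu1 (am := x' * am) (ai := bi) (bi := c₁) (bp := t) (x' := u₁)
      (by rw [hc₁]; exact hL₁) (by rw [hc₁, hu₁]) hbp.symm
    have hmm : u₁ * (x' * am) = zb * am := by rw [← mul_assoc, hzbe]
    rw [hmm, hC] at hstep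
    exact hstep

theorem lc_Do (h : IsGcdMon M) (hn : Noeth M) (ho : ThreeOre M)
    {p s : List M} (hp : p.length % 2 = 1)
    {am ai ap x y bi bp x' ci cp y' : M} (hx : x ≠ 1) (hy : y ≠ 1)
    (hlcm : IsLeftLcm x ai (bi * x)) (he : bi * x = x' * ai) (hd : bp * x = ap)
    (hlcm' : IsLeftLcm y ai (ci * y)) (he' : ci * y = y' * ai) (hd' : cp * y = ap) :
    Joinable (p ++ (x' * am) :: bi :: bp :: s) (p ++ (y' * am) :: ci :: cp :: s) := by
  obtain ⟨z, hz⟩ := exists_llcm h hn ⟨ap, ⟨bp, hd⟩, ⟨cp, hd'⟩⟩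
  obtain ⟨m₃, hm1, hm2, hm3⟩ := ho.2 x y ai ⟨ap, ⟨bp, hd⟩, ⟨cp, hd'⟩⟩
    ⟨bi * x, ⟨bi, rfl⟩, ⟨x', he.symm⟩⟩ ⟨ci * y, ⟨ci, rfl⟩, ⟨y', he'.symm⟩⟩
  obtain ⟨K, hK⟩ := exists_llcm h hn ⟨m₃, hz.2.2 m₃ hm1 hm2, hm3⟩
  obtain ⟨C, hC⟩ := hK.1
  obtain ⟨zb, hzb⟩ := hK.2.1
  obtain ⟨t, ht⟩ := hz.2.2 ap ⟨bp, hd⟩ ⟨cp, hd'⟩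
  obtain ⟨u, hu⟩ := hz.1
  obtain ⟨v, hv⟩ := hz.2.1
  have hKlcm : IsLeftLcm z ai (C * z) := by rw [hC]; exact hK
  have hKe : C * z = zb * ai := by rw [hC, hzb]
  exact ⟨p ++ (zb * am) :: C :: t :: s,
    Do_side h hn hp hx hlcm he hd hKlcm hKe hu.symm ht,
    Do_side h hn hp hy hlcm' he' hd' hKlcm hKe hv.symm ht⟩
-- ==================== local confluence: dispatch ====================

theorem lc_mix1E (h : IsGcdMon M) (hn : Noeth M) {a b c : List M}
    {a₁ a₂ b₁ b₂ : M} {s : List M} {x : M} (hx : x ≠ 1)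
    (ha : a = a₁ :: a₂ :: s) (hb : b = b₁ :: b₂ :: s)
    (h1 : b₁ * x = a₁) (h2 : b₂ * x = a₂)
    {p₂ s₂ : List M} {y u v zz ci cp y' : M} (hp₂ : p₂.length % 2 = 0) (hy : y ≠ 1)
    (ha' : a = p₂ ++ u :: v :: zz :: s₂) (hc : c = p₂ ++ (u * y') :: ci :: cp :: s₂)
    (hlcm : IsRightLcm y v (y * ci)) (he : y * ci = v * y') (hd : y * cp = zz) :
    Joinable b c := by
  subst ha hb hc
  match p₂, ha' with
  | [], ha' =>
    simp only [List.nil_append, List.cons.injEq] at ha' ⊢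
    obtain ⟨rfl, rfl, rfl⟩ := ha'
    exact lc_C0 h hn hx hy h1 h2 hlcm he hd
  | [e], ha' => simp at hp₂
  | e :: f :: mid, ha' =>
    simp only [List.cons_append, List.cons.injEq] at ha'
    obtain ⟨rfl, rfl, rfl⟩ := ha'
    have := lc_far (q := []) (w := [a₁, a₂]) (w' := [b₁, b₂]) (mid := mid) (s₂ := s₂)
      (u := u) (v := v) (z := zz) (u' := u * y') (v' := ci) (z' := cp)
      (fun r => red_one r hx h1 h2) (by simp)
      (fun p' hp' => red_even (by simp at hp' hp₂ ⊢; omega) s₂ hy hlcm he hd)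
    simpa using this

theorem lc_mix1O (h : IsGcdMon M) (hn : Noeth M) {a b c : List M}
    {a₁ a₂ b₁ b₂ : M} {s : List M} {x : M} (hx : x ≠ 1)
    (ha : a = a₁ :: a₂ :: s) (hb : b = b₁ :: b₂ :: s)
    (h1 : b₁ * x = a₁) (h2 : b₂ * x = a₂)
    {p₂ s₂ : List M} {y u v zz ci cp y' : M} (hp₂ : p₂.length % 2 = 1) (hy : y ≠ 1)
    (ha' : a = p₂ ++ u :: v :: zz :: s₂) (hc : c = p₂ ++ (y' * u) :: ci :: cp :: s₂)
    (hlcm : IsLeftLcm y v (ci * y)) (he : ci * y = y' * v) (hd : cp * y = zz) :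
    Joinable b c := by
  subst ha hb hc
  match p₂, ha' with
  | [], ha' => simp at hp₂
  | [e], ha' =>
    simp only [List.cons_append, List.nil_append, List.cons.injEq] at ha' ⊢
    obtain ⟨rfl, rfl, rfl⟩ := ha'
    exact lc_B1 hx hy h1 h2 hlcm he hd
  | e :: f :: mid, ha' =>
    simp only [List.cons_append, List.cons.injEq] at ha'
    obtain ⟨rfl, rfl, rfl⟩ := ha'
    have := lc_far (q := []) (w := [a₁, a₂]) (w' := [b₁, b₂]) (mid := mid) (s₂ := s₂)
      (u := u) (v := v) (z := zz) (u' := y' * u) (v' := ci) (z' := cp)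
      (fun r => red_one r hx h1 h2) (by simp)
      (fun p' hp' => red_odd (by simp at hp' hp₂ ⊢; omega) s₂ hy hlcm he hd)
    simpa using this

theorem lc_mixEE (h : IsGcdMon M) (hn : Noeth M) (ho : ThreeOre M) {a b c : List M}
    {p₁ s₁ : List M} {x am ai ap bi bp x' : M} (hp₁ : p₁.length % 2 = 0) (hx : x ≠ 1)
    (ha : a = p₁ ++ am :: ai :: ap :: s₁) (hb : b = p₁ ++ (am * x') :: bi :: bp :: s₁)
    (hlcm : IsRightLcm x ai (x * bi)) (he : x * bi = ai * x') (hd : x * bp = ap)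
    {p₂ s₂ : List M} {y u v zz ci cp y' : M} (hp₂ : p₂.length % 2 = 0) (hy : y ≠ 1)
    (ha' : a = p₂ ++ u :: v :: zz :: s₂) (hc : c = p₂ ++ (u * y') :: ci :: cp :: s₂)
    (hlcm' : IsRightLcm y v (y * ci)) (he' : y * ci = v * y') (hd' : y * cp = zz)
    (hle : p₁.length ≤ p₂.length) :
    Joinable b c := by
  subst ha hb hc
  obtain ⟨t, rfl, hteq⟩ := append_decomp ha' hle
  match t, hteq with
  | [], hteq =>
    obtain ⟨rfl, rfl, rfl, rfl⟩ : am = u ∧ ai = v ∧ ap = zz ∧ s₁ = s₂ := by simpa using hteq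
    simpa using lc_De h hn ho hp₁ hx hy hlcm he hd hlcm' he' hd'
  | [e], hteq => exfalso; simp at hp₂; omega
  | [e, f], hteq =>
    simp only [List.cons_append, List.nil_append, List.cons.injEq] at hteq
    obtain ⟨rfl, rfl, rfl, rfl⟩ := hteq
    have := lc_Be hp₁ hx hy hlcm he hd hlcm' he' hd' (s := s₂) (am := am)
    simpa [List.append_assoc] using this
  | e :: f :: g :: mid, hteq =>
    simp only [List.cons_append, List.cons.injEq] at hteq
    obtain ⟨rfl, rfl, rfl, rfl⟩ := hteq
    have := lc_far (q := p₁) (w := [am, ai, ap]) (w' := [am * x', bi, bp]) (mid := mid) (s₂ := s₂)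
      (u := u) (v := v) (z := zz) (u' := u * y') (v' := ci) (z' := cp)
      (fun r => red_even hp₁ r hx hlcm he hd) (by simp)
      (fun p' hp' => red_even (by simp at hp' hp₂ ⊢; omega) s₂ hy hlcm' he' hd')
    simpa [List.append_assoc] using this

theorem lc_mixOO (h : IsGcdMon M) (hn : Noeth M) (ho : ThreeOre M) {a b c : List M}
    {p₁ s₁ : List M} {x am ai ap bi bp x' : M} (hp₁ : p₁.length % 2 = 1) (hx : x ≠ 1)
    (ha : a = p₁ ++ am :: ai :: ap :: s₁) (hb : b = p₁ ++ (x' * am) :: bi :: bp :: s₁)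
    (hlcm : IsLeftLcm x ai (bi * x)) (he : bi * x = x' * ai) (hd : bp * x = ap)
    {p₂ s₂ : List M} {y u v zz ci cp y' : M} (hp₂ : p₂.length % 2 = 1) (hy : y ≠ 1)
    (ha' : a = p₂ ++ u :: v :: zz :: s₂) (hc : c = p₂ ++ (y' * u) :: ci :: cp :: s₂)
    (hlcm' : IsLeftLcm y v (ci * y)) (he' : ci * y = y' * v) (hd' : cp * y = zz)
    (hle : p₁.length ≤ p₂.length) :
    Joinable b c := by
  subst ha hb hc
  obtain ⟨t, rfl, hteq⟩ := append_decomp ha' hle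
  match t, hteq with
  | [], hteq =>
    obtain ⟨rfl, rfl, rfl, rfl⟩ : am = u ∧ ai = v ∧ ap = zz ∧ s₁ = s₂ := by simpa using hteq
    simpa using lc_Do h hn ho hp₁ hx hy hlcm he hd hlcm' he' hd'
  | [e], hteq => exfalso; simp at hp₂; omega
  | [e, f], hteq =>
    simp only [List.cons_append, List.nil_append, List.cons.injEq] at hteq
    obtain ⟨rfl, rfl, rfl, rfl⟩ := hteq
    have := lc_Bo hp₁ hx hy hlcm he hd hlcm' he' hd' (s := s₂) (am := am)
    simpa [List.append_assoc] using this
  | e :: f :: g :: mid, hteq =>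
    simp only [List.cons_append, List.cons.injEq] at hteq
    obtain ⟨rfl, rfl, rfl, rfl⟩ := hteq
    have := lc_far (q := p₁) (w := [am, ai, ap]) (w' := [x' * am, bi, bp]) (mid := mid) (s₂ := s₂)
      (u := u) (v := v) (z := zz) (u' := y' * u) (v' := ci) (z' := cp)
      (fun r => red_odd hp₁ r hx hlcm he hd) (by simp)
      (fun p' hp' => red_odd (by simp at hp' hp₂ ⊢; omega) s₂ hy hlcm' he' hd')
    simpa [List.append_assoc] using this

theorem lc_mixEO (h : IsGcdMon M) (hn : Noeth M) {a b c : List M}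
    {p₁ s₁ : List M} {x am ai ap bi bp x' : M} (hp₁ : p₁.length % 2 = 0) (hx : x ≠ 1)
    (ha : a = p₁ ++ am :: ai :: ap :: s₁) (hb : b = p₁ ++ (am * x') :: bi :: bp :: s₁)
    (hlcm : IsRightLcm x ai (x * bi)) (he : x * bi = ai * x') (hd : x * bp = ap)
    {p₂ s₂ : List M} {y u v zz ci cp y' : M} (hp₂ : p₂.length % 2 = 1) (hy : y ≠ 1)
    (ha' : a = p₂ ++ u :: v :: zz :: s₂) (hc : c = p₂ ++ (y' * u) :: ci :: cp :: s₂)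
    (hlcm' : IsLeftLcm y v (ci * y)) (he' : ci * y = y' * v) (hd' : cp * y = zz)
    (hle : p₁.length ≤ p₂.length) :
    Joinable b c := by
  subst ha hb hc
  obtain ⟨t, rfl, hteq⟩ := append_decomp ha' (by omega)
  match t, hteq with
  | [], hteq => exfalso; simp at hp₂; omega
  | [e], hteq =>
    simp only [List.cons_append, List.nil_append, List.cons.injEq] at hteq
    obtain ⟨rfl, rfl, rfl, rfl⟩ := hteq
    have := lc_C1 h hn hp₁ hx hy hlcm he hd hlcm' he' hd' (s := s₂) (m := am)
    simpa [List.append_assoc] using this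
  | [e, f], hteq => exfalso; simp at hp₂; omega
  | e :: f :: g :: mid, hteq =>
    simp only [List.cons_append, List.cons.injEq] at hteq
    obtain ⟨rfl, rfl, rfl, rfl⟩ := hteq
    have := lc_far (q := p₁) (w := [am, ai, ap]) (w' := [am * x', bi, bp]) (mid := mid) (s₂ := s₂)
      (u := u) (v := v) (z := zz) (u' := y' * u) (v' := ci) (z' := cp)
      (fun r => red_even hp₁ r hx hlcm he hd) (by simp)
      (fun p' hp' => red_odd (by simp at hp' hp₂ ⊢; omega) s₂ hy hlcm' he' hd')
    simpa [List.append_assoc] using this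

theorem lc_mixOE (h : IsGcdMon M) (hn : Noeth M) {a b c : List M}
    {p₁ s₁ : List M} {x am ai ap bi bp x' : M} (hp₁ : p₁.length % 2 = 1) (hx : x ≠ 1)
    (ha : a = p₁ ++ am :: ai :: ap :: s₁) (hb : b = p₁ ++ (x' * am) :: bi :: bp :: s₁)
    (hlcm : IsLeftLcm x ai (bi * x)) (he : bi * x = x' * ai) (hd : bp * x = ap)
    {p₂ s₂ : List M} {y u v zz ci cp y' : M} (hp₂ : p₂.length % 2 = 0) (hy : y ≠ 1)
    (ha' : a = p₂ ++ u :: v :: zz :: s₂) (hc : c = p₂ ++ (u * y') :: ci :: cp :: s₂)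
    (hlcm' : IsRightLcm y v (y * ci)) (he' : y * ci = v * y') (hd' : y * cp = zz)
    (hle : p₁.length ≤ p₂.length) :
    Joinable b c := by
  subst ha hb hc
  obtain ⟨t, rfl, hteq⟩ := append_decomp ha' (by omega)
  match t, hteq with
  | [], hteq => exfalso; simp at hp₂; omega
  | [e], hteq =>
    simp only [List.cons_append, List.nil_append, List.cons.injEq] at hteq
    obtain ⟨rfl, rfl, rfl, rfl⟩ := hteq
    have := lc_C2 h hn hp₁ hx hy hlcm he hd hlcm' he' hd' (s := s₂) (m := am)
    simpa [List.append_assoc] using this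
  | [e, f], hteq => exfalso; simp at hp₂; omega
  | e :: f :: g :: mid, hteq =>
    simp only [List.cons_append, List.cons.injEq] at hteq
    obtain ⟨rfl, rfl, rfl, rfl⟩ := hteq
    have := lc_far (q := p₁) (w := [am, ai, ap]) (w' := [x' * am, bi, bp]) (mid := mid) (s₂ := s₂)
      (u := u) (v := v) (z := zz) (u' := u * y') (v' := ci) (z' := cp)
      (fun r => red_odd hp₁ r hx hlcm he hd) (by simp)
      (fun p' hp' => red_even (by simp at hp' hp₂ ⊢; omega) s₂ hy hlcm' he' hd')
    simpa [List.append_assoc] using this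

theorem local_confluence (h : IsGcdMon M) (hn : Noeth M) (ho : ThreeOre M)
    {a b c : List M} (hb : Red a b) (hc : Red a c) : Joinable b c := by
  rcases red_cases hb with
    ⟨a₁, a₂, b₁, b₂, s, x, hx, ha, hbe, h1, h2⟩ |
    ⟨p₁, s₁, x, am, ai, ap, bi, bp, x', hp₁, hx, ha, hbe, hlcm, he, hd⟩ |
    ⟨p₁, s₁, x, am, ai, ap, bi, bp, x', hp₁, hx, ha, hbe, hlcm, he, hd⟩ <;>
  rcases red_cases hc with
    ⟨c₁', c₂', d₁, d₂, s', y, hy, ha', hce, k1, k2⟩ |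
    ⟨p₂, s₂, y, u, v, zz, ci, cp, y', hp₂, hy, ha', hce, hlcm', he', hd'⟩ |
    ⟨p₂, s₂, y, u, v, zz, ci, cp, y', hp₂, hy, ha', hce, hlcm', he', hd'⟩
  · -- 1,1
    subst ha hbe hce
    simp only [List.cons.injEq] at ha'
    obtain ⟨rfl, rfl, rfl⟩ := ha'
    exact lc_D1 h hn hx hy h1 h2 k1 k2
  · exact lc_mix1E h hn hx ha hbe h1 h2 hp₂ hy ha' hce hlcm' he' hd'
  · exact lc_mix1O h hn hx ha hbe h1 h2 hp₂ hy ha' hce hlcm' he' hd'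
  · exact (lc_mix1E h hn hy ha' hce k1 k2 hp₁ hx ha hbe hlcm he hd).symm
  · rcases le_total p₁.length p₂.length with hle | hle
    · exact lc_mixEE h hn ho hp₁ hx ha hbe hlcm he hd hp₂ hy ha' hce hlcm' he' hd' hle
    · exact (lc_mixEE h hn ho hp₂ hy ha' hce hlcm' he' hd' hp₁ hx ha hbe hlcm he hd hle).symm
  · rcases Nat.lt_or_ge p₁.length p₂.length with hlt | hge
    · exact lc_mixEO h hn hp₁ hx ha hbe hlcm he hd hp₂ hy ha' hce hlcm' he' hd' (by omega)
    · exact (lc_mixOE h hn hp₂ hy ha' hce hlcm' he' hd' hp₁ hx ha hbe hlcm he hd (by omega)).symm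
  · exact (lc_mix1O h hn hy ha' hce k1 k2 hp₁ hx ha hbe hlcm he hd).symm
  · rcases Nat.lt_or_ge p₁.length p₂.length with hlt | hge
    · exact lc_mixOE h hn hp₁ hx ha hbe hlcm he hd hp₂ hy ha' hce hlcm' he' hd' (by omega)
    · exact (lc_mixEO h hn hp₂ hy ha' hce hlcm' he' hd' hp₁ hx ha hbe hlcm he hd (by omega)).symm
  · rcases le_total p₁.length p₂.length with hle | hle
    · exact lc_mixOO h hn ho hp₁ hx ha hbe hlcm he hd hp₂ hy ha' hce hlcm' he' hd' hle
    · exact (lc_mixOO h hn ho hp₂ hy ha' hce hlcm' he' hd' hp₁ hx ha hbe hlcm he hd hle).symm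

/-- over a noetherian gcd-monoid satisfying the 3-Ore condition,
the reduction system is convergent: it terminates and every multifraction
reduces to a unique irreducible multifraction. -/
theorem stmt_15 {M : Type*} [Monoid M] (h : IsGcdMon M) (hn : Noeth M)
    (ho : ThreeOre M) :
    (∀ f : ℕ → List M, ¬ (∀ n : ℕ, Red (f n) (f (n + 1)))) ∧
    (∀ a : List M, ∃! b : List M, RedStar a b ∧ RIrred b) := by
  have hwf := redInv_wf h.unit_eq_one hn
  constructor
  · exact fun f => no_infinite_chain h.unit_eq_one hn f
  · intro a
    obtain ⟨b, hb1, hb2⟩ := nf_exists hwf a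
    refine ⟨b, ⟨hb1, hb2⟩, ?_⟩
    rintro y ⟨hy1, hy2⟩
    obtain ⟨d, hyd, hbd⟩ := newman hwf
      (fun a b c hb hc => local_confluence h hn ho hb hc) a y b hy1 hb1
    exact (star_irred hy2 hyd).trans (star_irred hb2 hbd).symm

end MFR
end

section
/- In a noetherian gcd-monoid, if elements a, b, x₁, …, x_p satisfy ax₁ = bx₂, ax₂ = bx₃, …, ax_{p−1} = bx_p, and ax_p = bx₁, then a = b. -/
namespace MFR

variable {M : Type*} [Monoid M]

/-- In a noetherian gcd-monoid, two elements with a common right multiple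
have a right lcm. -/
theorem exists_rlcm_aux {M : Type*} [Monoid M] (h : IsGcdMon M) (hn : Noeth M)
    {a b c : M} (ha : LeftDvd a c) (hb : LeftDvd b c) :
    ∃ m, LeftDvd a m ∧ LeftDvd b m ∧ ∀ n, LeftDvd a n → LeftDvd b n → LeftDvd m n := by
  set S : Set M := {n | LeftDvd a n ∧ LeftDvd b n} with hS
  obtain ⟨m, hmS, hmin⟩ := hn.1.has_min S ⟨c, ha, hb⟩
  refine ⟨m, hmS.1, hmS.2, fun n han hbn => ?_⟩
  obtain ⟨d, hd⟩ := h.exists_leftGcd m n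
  have hdS : d ∈ S := ⟨hd.2.2 a hmS.1 han, hd.2.2 b hmS.2 hbn⟩
  obtain ⟨t, ht⟩ := hd.1
  by_cases hu : IsUnit t
  · have := h.unit_eq_one t hu
    subst this
    rw [mul_one] at ht
    rw [← ht]
    exact hd.2.1
  · exact absurd ⟨t, hu, ht⟩ (hmin d hdS)

open Fin.NatCast Fin.CommRing in
theorem stmt_18_aux {M : Type*} [Monoid M] (h : IsGcdMon M) (hn : Noeth M)
    (p : ℕ) [NeZero p] : ∀ z : M, ∀ a b : M, ∀ x : Fin p → M, x 0 = z →
    (∀ i : Fin p, a * x i = b * x (i + 1)) → a = b := by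
  intro z
  induction z using hn.2.induction with
  | _ z IH =>
    intro a b x hz hx
    -- a and b have a common right multiple
    obtain ⟨m, ⟨b', hb'⟩, ⟨a', ha'⟩, hmin⟩ :=
      exists_rlcm_aux h hn (a := a) (b := b) (c := a * x 0)
        ⟨x 0, rfl⟩ ⟨x (0 + 1), (hx 0).symm⟩
    -- m divides each a * x i, producing y i with x i = b' * y i, x (i+1) = a' * y i
    have key : ∀ i : Fin p, ∃ y, x i = b' * y ∧ x (i + 1) = a' * y := by
      intro i
      obtain ⟨y, hy⟩ := hmin (a * x i) ⟨x i, rfl⟩ ⟨x (i + 1), (hx i).symm⟩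
      refine ⟨y, ?_, ?_⟩
      · apply h.mul_left_cancel a
        rw [← mul_assoc, hb', hy]
      · apply h.mul_left_cancel b
        rw [← mul_assoc, ha', hy, hx i]
    choose y hy1 hy2 using key
    have hx' : ∀ i : Fin p, a' * y i = b' * y (i + 1) := by
      intro i
      rw [← hy2 i, ← hy1 (i + 1)]
    by_cases hub : IsUnit b'
    · -- b' = 1, so x (i+1) = a' * x i, hence a'^p = 1, a' = 1, a = b
      have hb1 : b' = 1 := h.unit_eq_one b' hub
      subst hb1
      have hstep : ∀ i : Fin p, x (i + 1) = a' * x i := by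
        intro i
        rw [hy2 i, hy1 i, one_mul]
      have hpow : ∀ n : ℕ, x ((n : Fin p)) = a' ^ n * x 0 := by
        intro n
        induction n with
        | zero => simp
        | succ k ih =>
          have : ((k + 1 : ℕ) : Fin p) = (k : Fin p) + 1 := by push_cast; ring
          rw [this, hstep, ih, ← mul_assoc, ← pow_succ']
      have hp0 : ((p : ℕ) : Fin p) = (0 : Fin p) := by
        simp [Fin.natCast_self]
      have hxp : x 0 = a' ^ p * x 0 := by
        have := hpow p
        rwa [hp0] at this
      have hap : a' ^ p = 1 := by
        apply h.mul_right_cancel (x 0)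
        rw [← hxp, one_mul]
      have hpa : a' * a' ^ (p - 1) = 1 := by
        rw [← pow_succ']
        have : p - 1 + 1 = p := Nat.succ_pred_eq_of_pos (Nat.pos_of_ne_zero (NeZero.ne p))
        rw [this, hap]
      have hap' : a' ^ (p - 1) * a' = 1 := by
        rw [← pow_succ]
        have : p - 1 + 1 = p := Nat.succ_pred_eq_of_pos (Nat.pos_of_ne_zero (NeZero.ne p))
        rw [this, hap]
      have ha1 : a' = 1 := h.unit_eq_one a' ⟨⟨a', a' ^ (p - 1), hpa, hap'⟩, rfl⟩
      rw [← mul_one a, hb', ← ha', ha1, mul_one]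
    · -- b' is not a unit: y 0 is properly below x 0 = z, apply IH
      have hlt : PRDvd (y 0) z := ⟨b', hub, by rw [(hy1 0).symm, hz]⟩
      have hab : a' = b' := IH (y 0) hlt a' b' y rfl hx'
      apply h.mul_right_cancel b'
      rw [hb', ← ha', hab]

/-- cyclic system `a xᵢ = b xᵢ₊₁` forces `a = b`. -/
theorem stmt_18 {M : Type*} [Monoid M] (h : IsGcdMon M) (hn : Noeth M)
    (p : ℕ) [NeZero p] (a b : M) (x : Fin p → M)
    (hx : ∀ i : Fin p, a * x i = b * x (i + 1)) : a = b :=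
  stmt_18_aux h hn p (x 0) a b x rfl hx

end MFR
end
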